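/- arXiv:1310.0304 — 4 statements merged into one kernel-verified Lean document; each statement's English description precedes it below -/
import Mathlib

section
/- Let (X, υ) be a compact metric measure space such that X is a geodesic space, (X, υ) satisfies the doubling condition for some κ > 0, and (X, υ) satisfies the segment inequality for some λ > 0. Then for every Lipschitz function f on X, the global Lipschitz constant sup_{a ≠ b} |f(a) − f(b)|/d(a,b) equals the υ-essential supremum of the pointwise Lipschitz constant Lip f. -/
open MeasureTheory Metric Filter Set
open scoped Topology NNReal ENNReal
open Classical

variable {X : Type*} [MetricSpace X]

/-- A real-valued function is Lipschitz (with some constant). -/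
def IsLipFun (f : X → ℝ) : Prop := ∃ K : ℝ≥0, LipschitzWith K f

/-- The pointwise Lipschitz constant `Lip f (x)`:
`0` if `x` is isolated, and otherwise the limit (= infimum, by monotonicity)
as `r → 0` of `sup_{y ∈ B_r(x), y ≠ x} |f x - f y| / dist x y`. -/
noncomputable def pLip (f : X → ℝ) (x : X) : ℝ :=
  if 𝓝[≠] x = ⊥ then 0
  else ⨅ r : Ioi (0:ℝ), sSup ((fun y => |f x - f y| / dist x y) '' (ball x r.1 \ {x}))

/-- `γ` is a (unit-speed) minimal geodesic from `x` to `y`. -/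
def IsMinGeodesic (γ : ℝ → X) (x y : X) : Prop :=
  γ 0 = x ∧ γ (dist x y) = y ∧
    ∀ s ∈ Icc (0:ℝ) (dist x y), ∀ t ∈ Icc (0:ℝ) (dist x y), dist (γ s) (γ t) = |s - t|

/-- A metric space is geodesic if any two points are joined by a minimal geodesic. -/
def IsGeodesicSpace (Y : Type*) [MetricSpace Y] : Prop :=
  ∀ x y : Y, ∃ γ : ℝ → Y, IsMinGeodesic γ x y

section MeasureDefs
variable [MeasurableSpace X] (υ : Measure X)

/-- The doubling condition for `κ`. -/
def DoublingFor (κ : ℝ) : Prop :=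
  ∀ x : X, ∀ r : ℝ, 0 < r → υ (ball x (2*r)) ≤ (2:ℝ≥0∞) ^ κ * υ (ball x r)

/-- The `(q,p)`-Poincaré inequality for `τ` (for Lipschitz functions). -/
def PoincareFor (q p τ : ℝ) : Prop :=
  ∀ x : X, ∀ r : ℝ, 0 < r → ∀ f : X → ℝ, IsLipFun f →
    (⨍ y in ball x r, |f y - ⨍ z in ball x r, f z ∂υ| ^ q ∂υ) ^ (1/q) ≤
      τ * r * ((⨍ y in ball x r, (pLip f y) ^ p ∂υ) ^ (1/p))

/-- `F_g(x,y)`: the infimum over minimal geodesics `γ` from `x` to `y` of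
`∫_0^{d(x,y)} g(γ(s)) ds`. -/
noncomputable def segF (g : X → ℝ≥0∞) (x y : X) : ℝ≥0∞ :=
  ⨅ γ ∈ {γ : ℝ → X | IsMinGeodesic γ x y}, ∫⁻ s in Icc (0:ℝ) (dist x y), g (γ s)

/-- The segment inequality for `lam`. -/
def SegmentIneqFor (lam : ℝ) : Prop :=
  ∀ x : X, ∀ r : ℝ, 0 < r → ∀ g : X → ℝ≥0∞, Measurable g →
    (∫⁻ pr in (ball x r) ×ˢ (ball x r), segF g pr.1 pr.2 ∂(υ.prod υ)) ≤
      ENNReal.ofReal (lam * r) * υ (ball x r) * ∫⁻ z in ball x (3*r), g z ∂υ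

/-- The first eigenvalue of the `p`-Laplacian (`∞` if there is no competitor). -/
noncomputable def lambda1 (p : ℝ) : ℝ≥0∞ :=
  ⨅ f ∈ {f : X → ℝ | IsLipFun f ∧ (∫ x, |f x| ^ p ∂υ) = 1 ∧
      (∫ x, |f x| ^ (p-2) * f x ∂υ) = 0},
    ENNReal.ofReal (∫ x, (pLip f x) ^ p ∂υ)

/-- Minkowski's exterior boundary measure
`υ⁺(A) = liminf_{r → 0+} (υ(B_r(A)) - υ(A))/r`. -/
noncomputable def minkBoundary (A : Set X) : ℝ≥0∞ :=
  Filter.liminf (fun r : ℝ => (υ (thickening r A) - υ A) / ENNReal.ofReal r) (𝓝[>] (0:ℝ))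

/-- The Cheeger constant (`∞` if there is no competitor). -/
noncomputable def cheeger : ℝ≥0∞ :=
  ⨅ A ∈ {A : Set X | MeasurableSet A ∧ 0 < υ A ∧ υ A ≤ 1/2}, minkBoundary υ A / υ A

/-- `λ_{1,p}` for `p ∈ [1, ∞)`, with `λ_{1,1} := h(X)` the Cheeger constant. -/
noncomputable def lam1 (p : ℝ) : ℝ≥0∞ := if p = 1 then cheeger υ else lambda1 υ p

/-- `c_p(f) = inf_{c ∈ ℝ} (∫ |f - c|^p dυ)^{1/p}`. -/
noncomputable def cP (p : ℝ) (f : X → ℝ) : ℝ :=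
  ⨅ c : ℝ, (∫ x, |f x - c| ^ p ∂υ) ^ (1/p)

/-- `M` is a median of `f`. -/
def IsMedian (f : X → ℝ) (M : ℝ) : Prop :=
  (1/2 : ℝ≥0∞) ≤ υ {x | M ≤ f x} ∧ (1/2 : ℝ≥0∞) ≤ υ {x | f x ≤ M}

end MeasureDefs

/-- The global Lipschitz constant `sup_{a ≠ b} |f a - f b| / dist a b`. -/
noncomputable def globalLip (f : X → ℝ) : ℝ :=
  sSup {L : ℝ | ∃ a b : X, a ≠ b ∧ L = |f a - f b| / dist a b}


section Aux

variable {X : Type*} [MetricSpace X]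

lemma lipRatio_le {K : ℝ≥0} {f : X → ℝ} (hK : LipschitzWith K f) {x y : X} (hxy : y ≠ x) :
    |f x - f y| / dist x y ≤ K := by
  rw [div_le_iff₀ (dist_pos.2 (Ne.symm hxy))]
  have := hK.dist_le_mul x y
  rwa [Real.dist_eq] at this

lemma bddAbove_ratio {K : ℝ≥0} {f : X → ℝ} (hK : LipschitzWith K f) (x : X) (r : ℝ) :
    BddAbove ((fun y => |f x - f y| / dist x y) '' (ball x r \ {x})) := by
  refine ⟨K, ?_⟩
  rintro _ ⟨y, hy, rfl⟩
  exact lipRatio_le hK hy.2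

lemma ratio_nonneg {f : X → ℝ} (x : X) (r : ℝ) :
    ∀ a ∈ (fun y => |f x - f y| / dist x y) '' (ball x r \ {x}), 0 ≤ a := by
  rintro _ ⟨y, hy, rfl⟩
  positivity

lemma pLip_nonneg (f : X → ℝ) (x : X) : 0 ≤ pLip f x := by
  unfold pLip; split
  · exact le_refl 0
  · haveI : Nonempty (Ioi (0:ℝ)) := ⟨⟨1, mem_Ioi.2 one_pos⟩⟩
    exact le_ciInf fun r => Real.sSup_nonneg (ratio_nonneg x r.1)

lemma pLip_le {K : ℝ≥0} {f : X → ℝ} (hK : LipschitzWith K f) (x : X) : pLip f x ≤ K := by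
  unfold pLip; split
  · exact K.coe_nonneg
  · refine ciInf_le_of_le ⟨0, ?_⟩ ⟨1, mem_Ioi.2 one_pos⟩ (Real.sSup_le ?_ K.coe_nonneg)
    · rintro _ ⟨r, rfl⟩
      exact Real.sSup_nonneg (ratio_nonneg x r.1)
    · rintro _ ⟨y, hy, rfl⟩
      exact lipRatio_le hK hy.2

lemma exists_ball_of_pLip_lt {K : ℝ≥0} {f : X → ℝ} (hK : LipschitzWith K f) {x : X} {M : ℝ}
    (h : pLip f x < M) : ∃ r > 0, ∀ y ∈ ball x r, |f x - f y| ≤ M * dist x y := by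
  unfold pLip at h; split at h
  · next hb =>
    have hx : x ∉ closure ({x}ᶜ : Set X) := by
      rw [mem_closure_iff_nhdsWithin_neBot]
      exact fun hnb => hnb.ne hb
    rw [Metric.mem_closure_iff] at hx; push_neg at hx
    obtain ⟨r, hr, hball⟩ := hx
    refine ⟨r, hr, fun y hy => ?_⟩
    have hyx : y = x := by
      by_contra hne
      exact absurd (hball y hne) (not_le.2 (mem_ball'.1 hy))
    simp [hyx]
  · next hb =>
    obtain ⟨r, hr⟩ := exists_lt_of_ciInf_lt h
    refine ⟨r.1, r.2, fun y hy => ?_⟩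
    by_cases hxy : y = x
    · simp [hxy]
    · have hmem : |f x - f y| / dist x y ∈
          (fun y => |f x - f y| / dist x y) '' (ball x r.1 \ {x}) := ⟨y, ⟨hy, hxy⟩, rfl⟩
      have h2 := (le_csSup (bddAbove_ratio hK x r.1) hmem).trans_lt hr
      rw [div_lt_iff₀ (dist_pos.2 (Ne.symm hxy))] at h2
      linarith

/-- If `h` is `K`-Lipschitz on `[0,d]` and locally `M`-Lipschitz outside a null set `S`,
then `h d - h 0 ≤ M * d`. -/
lemma real_induction_bound {h : ℝ → ℝ} {K M d : ℝ} (hd : 0 ≤ d) (hM : 0 ≤ M) (hK : 0 ≤ K)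
    (hlip : ∀ s ∈ Icc (0:ℝ) d, ∀ t ∈ Icc (0:ℝ) d, |h s - h t| ≤ K * |s - t|)
    {S : Set ℝ} (hS : volume S = 0)
    (hloc : ∀ s ∈ Icc (0:ℝ) d, s ∉ S →
      ∃ δ > 0, ∀ t ∈ Icc (0:ℝ) d, |t - s| < δ → |h t - h s| ≤ M * |t - s|) :
    h d - h 0 ≤ M * d := by
  refine le_of_forall_pos_le_add fun θ hθ => ?_
  have hK1 : (0:ℝ) < K + 1 := by linarith
  set η := θ / (K + 1) with hη
  have hηpos : 0 < η := div_pos hθ hK1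
  obtain ⟨U, hSU, hUopen, hUvol⟩ := Set.exists_isOpen_lt_of_lt S (ENNReal.ofReal η)
    (by rw [hS]; exact ENNReal.ofReal_pos.2 hηpos)
  have hUfin : volume U ≠ ⊤ := (hUvol.trans ENNReal.ofReal_lt_top).ne
  set v : ℝ → ℝ := fun t => (volume (U ∩ Ioo 0 t)).toReal with hv
  have vmono : Monotone v := by
    intro s t hst
    exact ENNReal.toReal_mono ((measure_mono (inter_subset_left)).trans_lt
      (hUvol.trans ENNReal.ofReal_lt_top)).ne
      (measure_mono (inter_subset_inter_right _ (Ioo_subset_Ioo le_rfl hst)))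
  have vle : ∀ t, v t ≤ η := fun t => by
    have : volume (U ∩ Ioo 0 t) ≤ ENNReal.ofReal η := (measure_mono inter_subset_left).trans hUvol.le
    calc v t ≤ (ENNReal.ofReal η).toReal := ENNReal.toReal_mono ENNReal.ofReal_ne_top this
    _ = η := ENNReal.toReal_ofReal hηpos.le
  have vgrow : ∀ c t : ℝ, 0 ≤ c → c ≤ t → Ioo c t ⊆ U → v c + (t - c) ≤ v t := by
    intro c t hc hct hsub
    have hdisj : Disjoint (U ∩ Ioo 0 c) (Ioo c t) := by
      refine Set.disjoint_left.2 fun a ha ha' => ?_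
      exact absurd ha.2.2 (not_lt.2 ha'.1.le)
    have hsub2 : (U ∩ Ioo 0 c) ∪ Ioo c t ⊆ U ∩ Ioo 0 t := by
      rintro a (⟨haU, ha0, hac⟩ | ha)
      · exact ⟨haU, ha0, hac.trans_le hct⟩
      · exact ⟨hsub ha, hc.trans_lt ha.1, ha.2⟩
    have hm := measure_mono (μ := volume) hsub2
    rw [measure_union hdisj measurableSet_Ioo] at hm
    have hfin1 : volume (U ∩ Ioo 0 c) ≠ ⊤ := ((measure_mono inter_subset_left).trans_lt
      (hUvol.trans ENNReal.ofReal_lt_top)).ne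
    have hfin2 : volume (U ∩ Ioo 0 t) ≠ ⊤ := ((measure_mono inter_subset_left).trans_lt
      (hUvol.trans ENNReal.ofReal_lt_top)).ne
    have := ENNReal.toReal_mono hfin2 hm
    rw [ENNReal.toReal_add hfin1 (by simp)] at this
    simpa [hv, Real.volume_Ioo, ENNReal.toReal_ofReal (sub_nonneg.2 hct)] using this
  set T : Set ℝ := {t | t ∈ Icc (0:ℝ) d ∧ h t - h 0 ≤ M * t + (K+1) * v t} with hT
  have h0T : (0:ℝ) ∈ T := by
    constructor
    · exact ⟨le_rfl, hd⟩
    · have : v 0 = 0 := by simp [hv]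
      simp [this]
  have hTbdd : BddAbove T := ⟨d, fun t ht => ht.1.2⟩
  have hTne : T.Nonempty := ⟨0, h0T⟩
  set c := sSup T with hc
  have hcIcc : c ∈ Icc (0:ℝ) d := ⟨le_csSup hTbdd h0T, csSup_le hTne fun t ht => ht.1.2⟩
  have hcT : c ∈ T := by
    refine ⟨hcIcc, le_of_forall_pos_le_add fun ζ hζ => ?_⟩
    have hζ' : (0:ℝ) < ζ / (K+1) := div_pos hζ hK1
    obtain ⟨t, htT, htc⟩ := exists_lt_of_lt_csSup hTne (by linarith : c - ζ/(K+1) < c)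
    have htc' : t ≤ c := le_csSup hTbdd htT
    have h1 : h c - h t ≤ K * (c - t) := by
      have := hlip c hcIcc t htT.1
      rw [abs_sub_comm] at this
      have habs : |h c - h t| ≤ K * |c - t| := by rwa [abs_sub_comm] at this
      calc h c - h t ≤ |h c - h t| := le_abs_self _
      _ ≤ K * |c - t| := habs
      _ = K * (c - t) := by rw [abs_of_nonneg (by linarith)]
    have h2 : h t - h 0 ≤ M * t + (K+1) * v t := htT.2
    have h3 : v t ≤ v c := vmono htc'
    have h4 : K * (c - t) ≤ ζ := by
      have : c - t ≤ ζ / (K+1) := by linarith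
      calc K * (c - t) ≤ K * (ζ / (K+1)) := by nlinarith
      _ ≤ (K+1) * (ζ / (K+1)) := by nlinarith
      _ = ζ := by field_simp
    have h5 : M * t ≤ M * c := by nlinarith
    nlinarith [mul_le_mul_of_nonneg_left h3 (by linarith : (0:ℝ) ≤ K+1)]
  have hcd : c = d := by
    by_contra hne
    have hcd : c < d := lt_of_le_of_ne hcIcc.2 hne
    by_cases hcS : c ∈ S
    · obtain ⟨δ, hδ, hball⟩ := Metric.isOpen_iff.1 hUopen c (hSU hcS)
      set t := min d (c + δ/2) with htdef
      have hct : c < t := lt_min hcd (by linarith)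
      have htIcc : t ∈ Icc (0:ℝ) d := ⟨hcIcc.1.trans hct.le, min_le_left _ _⟩
      have hsub : Ioo c t ⊆ U := by
        intro a ha
        apply hball
        rw [Real.ball_eq_Ioo]
        constructor
        · linarith [ha.1, hδ]
        · have : a < c + δ/2 := lt_of_lt_of_le ha.2 (min_le_right _ _)
          linarith
      have hgrow := vgrow c t hcIcc.1 hct.le hsub
      have hlip' : h t - h c ≤ K * (t - c) := by
        have := hlip t htIcc c hcIcc
        calc h t - h c ≤ |h t - h c| := le_abs_self _
        _ ≤ K * |t - c| := this
        _ = K * (t - c) := by rw [abs_of_nonneg (by linarith)]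
      have htT : t ∈ T := by
        refine ⟨htIcc, ?_⟩
        have h2 := hcT.2
        nlinarith
      exact absurd (le_csSup hTbdd htT) (not_le.2 hct)
    · obtain ⟨δ, hδ, hloc'⟩ := hloc c hcIcc hcS
      set t := min d (c + δ/2) with htdef
      have hct : c < t := lt_min hcd (by linarith)
      have htIcc : t ∈ Icc (0:ℝ) d := ⟨hcIcc.1.trans hct.le, min_le_left _ _⟩
      have habs : |t - c| < δ := by
        rw [abs_of_nonneg (by linarith)]
        have : t ≤ c + δ/2 := min_le_right _ _
        linarith
      have hlip' : h t - h c ≤ M * (t - c) := by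
        have := hloc' t htIcc habs
        calc h t - h c ≤ |h t - h c| := le_abs_self _
        _ ≤ M * |t - c| := this
        _ = M * (t - c) := by rw [abs_of_nonneg (by linarith)]
      have htT : t ∈ T := by
        refine ⟨htIcc, ?_⟩
        have h2 := hcT.2
        have h3 := vmono hct.le
        nlinarith
      exact absurd (le_csSup hTbdd htT) (not_le.2 hct)
  have hfin := hcT.2
  rw [hcd] at hfin
  have : (K+1) * v d ≤ (K+1) * η := by nlinarith [vle d]
  have : (K+1) * η = θ := by rw [hη]; field_simp
  nlinarith [vle d]

lemma geodesic_bound {K : ℝ≥0} {f : X → ℝ} (hK : LipschitzWith K f) {M : ℝ} (hM : 0 ≤ M)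
    {y z : X} {γ : ℝ → X} (hγ : IsMinGeodesic γ y z)
    (hnull : volume {s | s ∈ Icc (0:ℝ) (dist y z) ∧ ¬ pLip f (γ s) < M} = 0) :
    |f y - f z| ≤ M * dist y z := by
  set d := dist y z with hd'
  have hd : 0 ≤ d := dist_nonneg
  set h : ℝ → ℝ := fun s => f (γ s) with hh
  have hlip : ∀ s ∈ Icc (0:ℝ) d, ∀ t ∈ Icc (0:ℝ) d, |h s - h t| ≤ K * |s - t| := by
    intro s hs t ht
    have h1 := hK.dist_le_mul (γ s) (γ t)
    rw [Real.dist_eq] at h1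
    rwa [hγ.2.2 s hs t ht] at h1
  have hloc : ∀ s ∈ Icc (0:ℝ) d, s ∉ {s | s ∈ Icc (0:ℝ) d ∧ ¬ pLip f (γ s) < M} →
      ∃ δ > 0, ∀ t ∈ Icc (0:ℝ) d, |t - s| < δ → |h t - h s| ≤ M * |t - s| := by
    intro s hs hsS
    have hplip : pLip f (γ s) < M := by
      by_contra hcon
      exact hsS ⟨hs, hcon⟩
    obtain ⟨r, hr, hb⟩ := exists_ball_of_pLip_lt hK hplip
    refine ⟨r, hr, fun t ht habs => ?_⟩
    have hmem : γ t ∈ ball (γ s) r := by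
      rw [mem_ball, hγ.2.2 t ht s hs]
      exact habs
    have h1 := hb (γ t) hmem
    rw [hγ.2.2 s hs t ht, abs_sub_comm s t] at h1
    rwa [abs_sub_comm (h t) (h s), hh]
  have h1 := real_induction_bound hd hM K.coe_nonneg hlip hnull hloc
  have hlip' : ∀ s ∈ Icc (0:ℝ) d, ∀ t ∈ Icc (0:ℝ) d,
      |(fun u => -h u) s - (fun u => -h u) t| ≤ K * |s - t| := by
    intro s hs t ht
    rw [show -h s - -h t = h t - h s from by ring, abs_sub_comm]
    exact hlip s hs t ht
  have hloc' : ∀ s ∈ Icc (0:ℝ) d, s ∉ {s | s ∈ Icc (0:ℝ) d ∧ ¬ pLip f (γ s) < M} →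
      ∃ δ > 0, ∀ t ∈ Icc (0:ℝ) d, |t - s| < δ →
        |(fun u => -h u) t - (fun u => -h u) s| ≤ M * |t - s| := by
    intro s hs hsS
    obtain ⟨δ, hδ, hb⟩ := hloc s hs hsS
    refine ⟨δ, hδ, fun t ht habs => ?_⟩
    rw [show -h t - -h s = h s - h t from by ring, abs_sub_comm]
    exact hb t ht habs
  have h2 := real_induction_bound hd hM K.coe_nonneg hlip' hnull hloc'
  have e0 : h 0 = f y := by rw [hh]; simp [hγ.1]
  have ed : h d = f z := by rw [hh]; exact congrArg f hγ.2.1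
  rw [abs_sub_le_iff]
  constructor
  · have : -h d - -h 0 ≤ M * d := h2
    rw [e0, ed] at this
    linarith
  · have : h d - h 0 ≤ M * d := h1
    rw [e0, ed] at this
    linarith

end Aux

section Aux2

variable {X : Type*} [MetricSpace X] [CompactSpace X] [MeasurableSpace X] [BorelSpace X]

lemma ball_pos_of_doubling (υ : Measure X) [IsProbabilityMeasure υ] {κ : ℝ}
    (hdoub : DoublingFor υ κ) (x : X) (r : ℝ) (hr : 0 < r) : 0 < υ (ball x r) := by
  have hiter : ∀ n : ℕ, υ (ball x (2 ^ n * r)) ≤ ((2:ℝ≥0∞) ^ κ) ^ n * υ (ball x r) := by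
    intro n; induction n with
    | zero => simp
    | succ n ih =>
      have h1 : (2:ℝ) ^ (n+1) * r = 2 * (2 ^ n * r) := by ring
      rw [h1]
      calc υ (ball x (2 * (2 ^ n * r))) ≤ (2:ℝ≥0∞) ^ κ * υ (ball x (2 ^ n * r)) :=
            hdoub x _ (by positivity)
      _ ≤ (2:ℝ≥0∞) ^ κ * (((2:ℝ≥0∞) ^ κ) ^ n * υ (ball x r)) := by
            exact mul_le_mul_right ih _
      _ = ((2:ℝ≥0∞) ^ κ) ^ (n+1) * υ (ball x r) := by rw [pow_succ]; ring
  obtain ⟨R0, hR0⟩ := (isCompact_univ (X := X)).isBounded.subset_closedBall x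
  obtain ⟨n, hn⟩ := pow_unbounded_of_one_lt ((R0 + 1)/r) (one_lt_two (α := ℝ))
  have huniv : ball x (2 ^ n * r) = univ := eq_univ_of_forall fun w => by
    have hw := hR0 (mem_univ w)
    rw [mem_closedBall] at hw
    rw [mem_ball]
    have h2 : R0 + 1 < 2 ^ n * r := by
      rw [div_lt_iff₀ hr] at hn
      linarith
    linarith
  by_contra h0
  push_neg at h0
  have hz : υ (ball x r) = 0 := le_antisymm h0 zero_le
  have h1 := hiter n
  rw [hz, mul_zero, huniv, measure_univ] at h1
  simp at h1

lemma main_ineq (υ : Measure X) [IsProbabilityMeasure υ] (hgeo : IsGeodesicSpace X)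
    {lam : ℝ} (hseg : SegmentIneqFor υ lam)
    (hpos : ∀ (x : X) (r : ℝ), 0 < r → 0 < υ (ball x r))
    {K : ℝ≥0} {f : X → ℝ} (hK : LipschitzWith K f)
    {M : ℝ} (hM0 : 0 ≤ M) (hae : ∀ᵐ x ∂υ, pLip f x < M) :
    ∀ y z : X, |f y - f z| ≤ M * dist y z := by
  by_contra hcon
  push_neg at hcon
  obtain ⟨a, b, hab⟩ := hcon
  have hEnull : υ {x | ¬ pLip f x < M} = 0 := hae
  set E' := toMeasurable υ {x | ¬ pLip f x < M} with hE'
  have hE'meas : MeasurableSet E' := measurableSet_toMeasurable υ _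
  have hE'null : υ E' = 0 := by rw [hE', measure_toMeasurable]; exact hEnull
  set g : X → ℝ≥0∞ := E'.indicator (fun _ => ⊤) with hg
  have hgmeas : Measurable g := measurable_const.indicator hE'meas
  obtain ⟨R0, hR0⟩ := (isCompact_univ (X := X)).isBounded.subset_closedBall a
  set R := max R0 0 + 1 with hR
  have hRpos : 0 < R := by positivity
  have hballuniv : ball a R = univ := eq_univ_of_forall fun w => by
    have hw := hR0 (mem_univ w)
    rw [mem_closedBall] at hw
    rw [mem_ball]
    calc dist w a ≤ R0 := hw
    _ ≤ max R0 0 := le_max_left _ _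
    _ < R := by rw [hR]; linarith
  set W : Set (X × X) := {p | M * dist p.1 p.2 < |f p.1 - f p.2|} with hW
  have hWopen : IsOpen W := by
    have hf1 : Continuous fun p : X × X => M * dist p.1 p.2 := by fun_prop
    have hf2 : Continuous fun p : X × X => |f p.1 - f p.2| :=
      ((hK.continuous.comp continuous_fst).sub (hK.continuous.comp continuous_snd)).abs
    exact isOpen_lt hf1 hf2
  have hWmem : (a, b) ∈ W := hab
  have hWpos : 0 < (υ.prod υ) W := by
    obtain ⟨u, v, hu, hv, hau, hbv, huv⟩ := isOpen_prod_iff.1 hWopen a b hWmem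
    obtain ⟨ρ1, hρ1, hsub1⟩ := Metric.isOpen_iff.1 hu a hau
    obtain ⟨ρ2, hρ2, hsub2⟩ := Metric.isOpen_iff.1 hv b hbv
    have hsub : ball a ρ1 ×ˢ ball b ρ2 ⊆ W := fun p hp =>
      huv (Set.mk_mem_prod (hsub1 hp.1) (hsub2 hp.2))
    calc (0:ℝ≥0∞) < υ (ball a ρ1) * υ (ball b ρ2) :=
          ENNReal.mul_pos (hpos a ρ1 hρ1).ne' (hpos b ρ2 hρ2).ne'
    _ = (υ.prod υ) (ball a ρ1 ×ˢ ball b ρ2) := (Measure.prod_prod _ _).symm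
    _ ≤ (υ.prod υ) W := measure_mono hsub
  have hsegtop : ∀ p ∈ W, segF g p.1 p.2 = ⊤ := by
    rintro ⟨y, z⟩ hp
    rw [segF]
    rw [iInf_eq_top]
    intro γ
    rw [iInf_eq_top]
    intro hγ
    by_contra hne
    have hγcont : ContinuousOn γ (Icc (0:ℝ) (dist y z)) := by
      refine LipschitzOnWith.continuousOn (K := 1) ?_
      rw [lipschitzOnWith_iff_dist_le_mul]
      intro s hs t ht
      rw [hγ.2.2 s hs t ht, Real.dist_eq]
      simp
    have haem : AEMeasurable (fun s => g (γ s)) (volume.restrict (Icc (0:ℝ) (dist y z))) :=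
      hgmeas.comp_aemeasurable (hγcont.aemeasurable measurableSet_Icc)
    have hae2 := ae_lt_top' haem hne
    have hnull : volume {s | s ∈ Icc (0:ℝ) (dist y z) ∧ ¬ pLip f (γ s) < M} = 0 := by
      have hsub : {s | s ∈ Icc (0:ℝ) (dist y z) ∧ ¬ pLip f (γ s) < M} ⊆
          {s | ¬ g (γ s) < ⊤} ∩ Icc (0:ℝ) (dist y z) := by
        rintro s ⟨hs1, hs2⟩
        have hmem : γ s ∈ E' := subset_toMeasurable υ _ hs2
        refine ⟨?_, hs1⟩
        simp only [mem_setOf_eq, hg, indicator_of_mem hmem, lt_self_iff_false, not_false_iff]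
      refine measure_mono_null hsub ?_
      rw [← Measure.restrict_apply' measurableSet_Icc]
      exact hae2
    exact absurd (geodesic_bound hK hM0 hγ hnull) (not_le.2 hp)
  have hle := hseg a R hRpos g hgmeas
  rw [hballuniv] at hle
  have hrhs : ∫⁻ z in ball a (3*R), g z ∂υ = 0 := by
    refine le_antisymm ?_ zero_le
    calc ∫⁻ z in ball a (3*R), g z ∂υ ≤ ∫⁻ z, g z ∂υ := setLIntegral_le_lintegral _ _
    _ = ⊤ * υ E' := by rw [hg, lintegral_indicator hE'meas, setLIntegral_const]
    _ = 0 := by rw [hE'null, mul_zero]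
  rw [hrhs, mul_zero] at hle
  have hW' : MeasurableSet W := hWopen.measurableSet
  have hlhs : (⊤:ℝ≥0∞) * (υ.prod υ) W ≤
      ∫⁻ pr in univ ×ˢ univ, segF g pr.1 pr.2 ∂(υ.prod υ) := by
    rw [univ_prod_univ, Measure.restrict_univ]
    calc (⊤:ℝ≥0∞) * (υ.prod υ) W = ∫⁻ pr, W.indicator (fun _ => (⊤:ℝ≥0∞)) pr ∂(υ.prod υ) := by
          rw [lintegral_indicator hW', setLIntegral_const]
    _ ≤ ∫⁻ pr, segF g pr.1 pr.2 ∂(υ.prod υ) := by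
          refine lintegral_mono fun pr => ?_
          by_cases hpr : pr ∈ W
          · rw [indicator_of_mem hpr, hsegtop pr hpr]
          · rw [indicator_of_notMem hpr]; exact zero_le
  have hzero : (⊤:ℝ≥0∞) * (υ.prod υ) W = 0 := le_antisymm (hlhs.trans hle) zero_le
  rw [ENNReal.top_mul hWpos.ne'] at hzero
  exact absurd hzero (by simp)

end Aux2

/-- the global Lipschitz constant equals the essential supremum of
the pointwise Lipschitz constant. -/
theorem stmt1 {X : Type*} [MetricSpace X] [CompactSpace X] [MeasurableSpace X] [BorelSpace X]
    (υ : Measure X) [IsProbabilityMeasure υ]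
    (hgeo : IsGeodesicSpace X)
    (κ : ℝ) (hκ : 0 < κ) (hdoub : DoublingFor υ κ)
    (lam : ℝ) (hlam : 0 < lam) (hseg : SegmentIneqFor υ lam)
    (f : X → ℝ) (hf : IsLipFun f) :
    globalLip f = essSup (fun x => pLip f x) υ := by
  obtain ⟨K, hK⟩ := hf
  haveI : (ae υ).NeBot := ae_neBot.2 (IsProbabilityMeasure.ne_zero υ)
  have hbdd : IsBoundedUnder (· ≤ ·) (ae υ) (fun x => pLip f x) :=
    Filter.isBoundedUnder_of ⟨K, fun x => pLip_le hK x⟩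
  have hL0 : 0 ≤ essSup (fun x => pLip f x) υ :=
    le_limsup_of_frequently_le
      ((Filter.Eventually.of_forall fun x => pLip_nonneg f x).frequently) hbdd
  set L := essSup (fun x => pLip f x) υ with hL
  have hpos := ball_pos_of_doubling υ hdoub
  refine le_antisymm ?_ ?_
  · -- globalLip ≤ L
    refine Real.sSup_le ?_ hL0
    rintro _ ⟨a, b, hab, rfl⟩
    have hdab : 0 < dist a b := dist_pos.2 hab
    rw [div_le_iff₀ hdab]
    refine le_of_forall_pos_le_add fun ε hε => ?_
    have hε' : 0 < ε / dist a b := div_pos hε hdab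
    have hae : ∀ᵐ x ∂υ, pLip f x < L + ε / dist a b :=
      eventually_lt_of_limsup_lt (by rw [hL]; exact lt_add_of_pos_right _ hε') hbdd
    have hmain := main_ineq υ hgeo hseg hpos hK (by linarith) hae a b
    have : (L + ε / dist a b) * dist a b = L * dist a b + ε := by
      field_simp
    linarith
  · -- L ≤ globalLip
    refine limsup_le_of_le (isCoboundedUnder_le_of_le _ fun x => pLip_nonneg f x) ?_
    refine Filter.Eventually.of_forall fun x => ?_
    -- pLip f x ≤ globalLip f
    have hSbdd : BddAbove {L : ℝ | ∃ a b : X, a ≠ b ∧ L = |f a - f b| / dist a b} := by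
      refine ⟨K, ?_⟩
      rintro _ ⟨a, b, hab, rfl⟩
      exact lipRatio_le hK (Ne.symm hab)
    have hg0 : 0 ≤ globalLip f := by
      refine Real.sSup_nonneg ?_
      rintro _ ⟨a, b, hab, rfl⟩
      positivity
    rw [pLip]
    split
    · exact hg0
    · next hnb =>
      haveI : Nonempty (Ioi (0:ℝ)) := ⟨⟨1, mem_Ioi.2 one_pos⟩⟩
      refine ciInf_le_of_le ⟨0, ?_⟩ ⟨1, mem_Ioi.2 one_pos⟩ (Real.sSup_le ?_ hg0)
      · rintro _ ⟨r, rfl⟩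
        exact Real.sSup_nonneg (ratio_nonneg x r.1)
      · rintro _ ⟨y, hy, rfl⟩
        refine le_csSup hSbdd ?_
        exact ⟨x, y, fun h => hy.2 h.symm, rfl⟩
end

section
/- Let (X, υ) be a compact metric measure space and let 1 < p < ∞. Then λ_{1,p}(X) = inf { ∫_X (Lip f)^p dυ : f Lipschitz on X with c_p(f) = 1 and ∫_X |f|^p dυ = 1 }, where both infima are taken in (0, ∞] and equal ∞ when the corresponding set of competitors is empty. -/
open MeasureTheory Metric Filter Set
open scoped Topology NNReal ENNReal
open Classical

variable {X : Type*} [MetricSpace X]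

-- pointwise tangent-line inequality for |x|^p
lemma abs_rpow_tangent {p : ℝ} (hp : 1 < p) (a b : ℝ) :
    |b| ^ p + p * (|b| ^ (p - 2) * b) * (a - b) ≤ |a| ^ p := by
  rcases eq_or_ne b 0 with rfl | hb
  · simp [Real.zero_rpow (by linarith : p ≠ 0), Real.rpow_nonneg (abs_nonneg a) p]
  · have hb' : (0:ℝ) < |b| := abs_pos.mpr hb
    have key : |b| ^ (p - 2) * b = |b| ^ p / b := by
      have h2 : |b| ^ (p - 2) = |b| ^ p / |b| ^ (2:ℝ) := by
        rw [← Real.rpow_sub hb']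
      rw [h2]
      have : |b| ^ (2:ℝ) = b ^ 2 := by
        rw [Real.rpow_two, sq_abs]
      rw [this]
      field_simp
    rw [key]
    set s : ℝ := (a - b) / b with hs_def
    have hmain : p * (|b| ^ p / b) * (a - b) = p * (|b| ^ p * s) := by
      rw [hs_def]
      ring
    rw [hmain]
    by_cases hs : -1 ≤ s
    · have hB := one_add_mul_self_le_rpow_one_add hs hp.le
      have h1s : 1 + s = a / b := by
        rw [hs_def, eq_div_iff hb, add_mul, div_mul_cancel₀ _ hb]; ring
      have habs : (1 + s) ^ p = |a| ^ p / |b| ^ p := by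
        have h0 : 0 ≤ 1 + s := by linarith
        calc (1 + s) ^ p = |1 + s| ^ p := by rw [abs_of_nonneg h0]
        _ = |a / b| ^ p := by rw [h1s]
        _ = (|a| / |b|) ^ p := by rw [abs_div]
        _ = |a| ^ p / |b| ^ p := Real.div_rpow (abs_nonneg a) (abs_nonneg b) p
      have h3 : |b| ^ p * (1 + p * s) ≤ |b| ^ p * (|a| ^ p / |b| ^ p) := by
        rw [← habs]
        exact mul_le_mul_of_nonneg_left hB (Real.rpow_nonneg hb'.le p)
      have h4 : |b| ^ p * (|a| ^ p / |b| ^ p) = |a| ^ p := by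
        field_simp
      nlinarith [h3, h4]
    · push_neg at hs
      have h1 : 1 + p * s < 0 := by nlinarith
      have h2 : |b| ^ p * (1 + p * s) < 0 :=
        mul_neg_of_pos_of_neg (Real.rpow_pos_of_pos hb' p) h1
      nlinarith [Real.rpow_nonneg (abs_nonneg a) p]

lemma abs_abs_rpow_mul {p : ℝ} (hp : 1 < p) (t : ℝ) :
    |(|t| ^ (p - 2) * t)| = |t| ^ (p - 1) := by
  rcases eq_or_ne t 0 with rfl | ht
  · simp [Real.zero_rpow ((by linarith : (0:ℝ) < p - 1).ne')]
  · rw [abs_mul, abs_of_nonneg (Real.rpow_nonneg (abs_nonneg t) _)]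
    rw [← Real.rpow_add_one (abs_ne_zero.mpr ht)]
    ring_nf

section MyAux
set_option linter.unusedSectionVars false
variable {X : Type*} [MetricSpace X] [CompactSpace X] [MeasurableSpace X] [BorelSpace X]

lemma bound_of_lip {f : X → ℝ} (hf : IsLipFun f) : ∃ M : ℝ, 0 ≤ M ∧ ∀ x, |f x| ≤ M := by
  obtain ⟨K, hK⟩ := hf
  have hc : Continuous fun x => |f x| := hK.continuous.abs
  obtain ⟨M, hM⟩ := (isCompact_range hc).bddAbove
  exact ⟨max M 0, le_max_right _ _, fun x =>
    le_trans (hM (mem_range_self x)) (le_max_left _ _)⟩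

lemma integrable_of_bounded (υ : Measure X) [IsProbabilityMeasure υ] {g : X → ℝ}
    (hg : AEStronglyMeasurable g υ) {M : ℝ} (h : ∀ x, |g x| ≤ M) : Integrable g υ :=
  Integrable.mono' (integrable_const M) hg (Filter.Eventually.of_forall
    (by simpa [Real.norm_eq_abs] using h))

lemma phi_hasDerivAt (υ : Measure X) [IsProbabilityMeasure υ] {p : ℝ} (hp : 1 < p)
    {f : X → ℝ} (hf : IsLipFun f) (c₀ : ℝ) :
    HasDerivAt (fun c => ∫ x, |f x - c| ^ p ∂υ)
      (∫ x, -(p * (|f x - c₀| ^ (p - 2) * (f x - c₀))) ∂υ) c₀ := by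
  obtain ⟨M, hM0, hM⟩ := bound_of_lip hf
  obtain ⟨K, hK⟩ := hf
  have hcont : Continuous f := hK.continuous
  have hgd : Differentiable ℝ fun u : ℝ => |u| ^ p :=
    fun u => (hasDerivAt_abs_rpow u hp).differentiableAt
  have hgc : Continuous fun u : ℝ => |u| ^ p := hgd.continuous
  have hFcont : ∀ c : ℝ, Continuous fun x => |f x - c| ^ p :=
    fun c => hgc.comp (hcont.sub continuous_const)
  have hp1 : (0:ℝ) ≤ p - 1 := by linarith
  have key := hasDerivAt_integral_of_dominated_loc_of_deriv_le (μ := υ) (x₀ := c₀)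
    (F := fun c x => |f x - c| ^ p)
    (F' := fun c x => -(p * (|f x - c| ^ (p - 2) * (f x - c))))
    (bound := fun _ => p * (M + |c₀| + 1) ^ (p - 1)) (ball_mem_nhds c₀ one_pos)
    (Filter.Eventually.of_forall fun c => (hFcont c).aestronglyMeasurable)
    (integrable_of_bounded υ (hFcont c₀).aestronglyMeasurable (M := (M + |c₀|) ^ p)
      (fun x => by
        have h1 : |f x - c₀| ≤ M + |c₀| := (abs_sub _ _).trans (by
          have := hM x; linarith)
        rw [abs_of_nonneg (Real.rpow_nonneg (abs_nonneg _) p)]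
        exact Real.rpow_le_rpow (abs_nonneg _) h1 (by linarith)))
    ?_ ?_ (integrable_const _) ?_
  · exact key.2
  · -- AEStronglyMeasurable of F' c₀
    have hdm : Measurable (deriv fun u : ℝ => |u| ^ p) := measurable_deriv _
    have h1 : Measurable fun x => f x - c₀ := (hcont.measurable).sub measurable_const
    refine (((hdm.comp h1).neg).aestronglyMeasurable).congr
      (Filter.Eventually.of_forall fun x => ?_)
    show -((deriv fun u : ℝ => |u| ^ p) (f x - c₀)) = _
    rw [(hasDerivAt_abs_rpow (f x - c₀) hp).deriv]
    ring
  · -- bound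
    refine Filter.Eventually.of_forall fun x => fun c hc => ?_
    have hc' : |c - c₀| < 1 := by simpa [Real.dist_eq] using hc
    have ht : |f x - c| ≤ M + |c₀| + 1 := by
      have : |f x - c| ≤ |f x| + |c| := abs_sub _ _
      have h2 : |c| ≤ |c₀| + |c - c₀| := by
        calc |c| = |c₀ + (c - c₀)| := by ring_nf
        _ ≤ |c₀| + |c - c₀| := abs_add_le _ _
      have := hM x
      linarith
    rw [Real.norm_eq_abs, abs_neg, abs_mul, abs_of_nonneg (by linarith : (0:ℝ) ≤ p),
      abs_abs_rpow_mul hp]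
    exact mul_le_mul_of_nonneg_left
      (Real.rpow_le_rpow (abs_nonneg _) ht hp1) (by linarith)
  · -- derivative
    refine Filter.Eventually.of_forall fun x => fun c hc => ?_
    have h1 : HasDerivAt (fun c : ℝ => f x - c) (-1) c :=
      (hasDerivAt_id c).const_sub (f x)
    have := (hasDerivAt_abs_rpow (f x - c) hp).comp c h1
    exact this.congr_deriv (by ring)


lemma integrable_abs_rpow (υ : Measure X) [IsProbabilityMeasure υ] {p : ℝ} (hp : 1 < p)
    {f : X → ℝ} (hf : IsLipFun f) (c : ℝ) :
    Integrable (fun x => |f x - c| ^ p) υ := by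
  obtain ⟨M, hM0, hM⟩ := bound_of_lip hf
  obtain ⟨K, hK⟩ := hf
  have hgd : Differentiable ℝ fun u : ℝ => |u| ^ p :=
    fun u => (hasDerivAt_abs_rpow u hp).differentiableAt
  have hgc : Continuous fun u : ℝ => |u| ^ p := hgd.continuous
  refine integrable_of_bounded υ
    ((hgc.comp (hK.continuous.sub continuous_const)).aestronglyMeasurable)
    (M := (M + |c|) ^ p) fun x => ?_
  have h1 : |f x - c| ≤ M + |c| := (abs_sub _ _).trans (by have := hM x; linarith)
  rw [abs_of_nonneg (Real.rpow_nonneg (abs_nonneg _) p)]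
  exact Real.rpow_le_rpow (abs_nonneg _) h1 (by linarith)

lemma integrable_moment (υ : Measure X) [IsProbabilityMeasure υ] {p : ℝ} (hp : 1 < p)
    {f : X → ℝ} (hf : IsLipFun f) :
    Integrable (fun x => |f x| ^ (p - 2) * f x) υ := by
  obtain ⟨M, hM0, hM⟩ := bound_of_lip hf
  obtain ⟨K, hK⟩ := hf
  have hdm : Measurable (deriv fun u : ℝ => |u| ^ p) := measurable_deriv _
  have hmeas : AEStronglyMeasurable (fun x => |f x| ^ (p - 2) * f x) υ := by
    refine ((((hdm.comp hK.continuous.measurable).const_mul (1/p))).aestronglyMeasurable).congr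
      (Filter.Eventually.of_forall fun x => ?_)
    show (1/p) * ((deriv fun u : ℝ => |u| ^ p) (f x)) = _
    rw [(hasDerivAt_abs_rpow (f x) hp).deriv]
    field_simp
  refine integrable_of_bounded υ hmeas (M := (M + 1) ^ (p - 1)) fun x => ?_
  rw [abs_abs_rpow_mul hp]
  exact Real.rpow_le_rpow (abs_nonneg _) (by have := hM x; linarith) (by linarith)

lemma constraint_iff (υ : Measure X) [IsProbabilityMeasure υ] {p : ℝ} (hp : 1 < p)
    {f : X → ℝ} (hf : IsLipFun f) (hnorm : (∫ x, |f x| ^ p ∂υ) = 1) :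
    (∫ x, |f x| ^ (p - 2) * f x ∂υ) = 0 ↔ cP υ p f = 1 := by
  have hp0 : (0:ℝ) < p := by linarith
  have hφnn : ∀ c : ℝ, 0 ≤ ∫ x, |f x - c| ^ p ∂υ := fun c =>
    integral_nonneg fun x => Real.rpow_nonneg (abs_nonneg _) _
  have hφ0 : (∫ x, |f x - 0| ^ p ∂υ) = 1 := by simpa using hnorm
  have hbdd : BddBelow (Set.range fun c : ℝ => (∫ x, |f x - c| ^ p ∂υ) ^ (1/p)) := by
    refine ⟨0, ?_⟩
    rintro y ⟨c, rfl⟩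
    exact Real.rpow_nonneg (hφnn c) _
  constructor
  · intro hmom
    have hge : ∀ c : ℝ, (1:ℝ) ≤ ∫ x, |f x - c| ^ p ∂υ := by
      intro c
      have hptw : ∀ x, |f x| ^ p + (p * (-c)) * (|f x| ^ (p - 2) * f x) ≤ |f x - c| ^ p := by
        intro x
        have := abs_rpow_tangent hp (f x - c) (f x)
        have h2 : f x - c - f x = -c := by ring
        rw [h2] at this
        nlinarith [this]
      have hintL : Integrable
          (fun x => |f x| ^ p + (p * (-c)) * (|f x| ^ (p - 2) * f x)) υ := by
        have h1 := integrable_abs_rpow υ hp hf 0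
        simp only [sub_zero] at h1
        exact h1.add ((integrable_moment υ hp hf).const_mul _)
      have hmono := integral_mono hintL (integrable_abs_rpow υ hp hf c) hptw
      rw [integral_add (by
          have h1 := integrable_abs_rpow υ hp hf 0
          simpa using h1) ((integrable_moment υ hp hf).const_mul _),
        integral_const_mul, hmom, hnorm] at hmono
      simpa using hmono
    refine le_antisymm ?_ ?_
    · have h := ciInf_le hbdd 0
      rw [hφ0, Real.one_rpow] at h
      exact h
    · refine le_ciInf fun c => ?_
      calc (1:ℝ) = 1 ^ (1/p) := (Real.one_rpow _).symm
      _ ≤ (∫ x, |f x - c| ^ p ∂υ) ^ (1/p) :=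
        Real.rpow_le_rpow zero_le_one (hge c) (by positivity)
  · intro hcp
    have hge : ∀ c : ℝ, (1:ℝ) ≤ ∫ x, |f x - c| ^ p ∂υ := by
      intro c
      have h := ciInf_le hbdd c
      unfold cP at hcp
      rw [hcp] at h
      have h2 : (1:ℝ) = 1 ^ p := (Real.one_rpow _).symm
      calc (1:ℝ) = 1 ^ p := h2
      _ ≤ ((∫ x, |f x - c| ^ p ∂υ) ^ (1/p)) ^ p :=
        Real.rpow_le_rpow zero_le_one h hp0.le
      _ = (∫ x, |f x - c| ^ p ∂υ) ^ ((1/p) * p) := (Real.rpow_mul (hφnn c) _ _).symm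
      _ = ∫ x, |f x - c| ^ p ∂υ := by
        rw [one_div_mul_cancel hp0.ne', Real.rpow_one]
    have hmin : IsLocalMin (fun c => ∫ x, |f x - c| ^ p ∂υ) 0 := by
      refine Filter.Eventually.of_forall fun c => ?_
      show (∫ x, |f x - 0| ^ p ∂υ) ≤ _
      rw [hφ0]
      exact hge c
    have hz := hmin.hasDerivAt_eq_zero (phi_hasDerivAt υ hp hf 0)
    simp only [sub_zero] at hz
    rw [integral_neg, integral_const_mul, neg_eq_zero] at hz
    rcases mul_eq_zero.mp hz with h | h
    · exact absurd h hp0.ne'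
    · exact h

end MyAux


/-- alternative formulation of `λ_{1,p}(X)` via `c_p`. -/
theorem stmt2 {X : Type*} [MetricSpace X] [CompactSpace X] [MeasurableSpace X] [BorelSpace X]
    (υ : Measure X) [IsProbabilityMeasure υ]
    (p : ℝ) (hp : 1 < p) :
    lambda1 υ p =
      ⨅ f ∈ {f : X → ℝ | IsLipFun f ∧ cP υ p f = 1 ∧ (∫ x, |f x| ^ p ∂υ) = 1},
        ENNReal.ofReal (∫ x, (pLip f x) ^ p ∂υ) := by
  have hset : {f : X → ℝ | IsLipFun f ∧ (∫ x, |f x| ^ p ∂υ) = 1 ∧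
      (∫ x, |f x| ^ (p-2) * f x ∂υ) = 0}
      = {f : X → ℝ | IsLipFun f ∧ cP υ p f = 1 ∧ (∫ x, |f x| ^ p ∂υ) = 1} := by
    ext f
    simp only [Set.mem_setOf_eq]
    constructor
    · rintro ⟨h1, h2, h3⟩
      exact ⟨h1, (constraint_iff υ hp h1 h2).1 h3, h2⟩
    · rintro ⟨h1, h2, h3⟩
      exact ⟨h1, h3, (constraint_iff υ hp h1 h3).2 h2⟩
  rw [lambda1, hset]
end

section
/- For every κ > 0 and every ε > 0 there exists δ ∈ (0, 1/2) such that for every compact metric measure space (X, υ) with X a geodesic space and (X, υ) satisfying the doubling condition for κ, every x ∈ X and every r > 0, one has υ(B_r(x) \ B_{(1−δ)r}(x)) ≤ ε · υ(B_r(x)). -/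
open MeasureTheory Metric Filter Set
open scoped Topology NNReal ENNReal
open Classical

variable {X : Type*} [MetricSpace X]

section AnnulusAux

/-- The constant `2^{3κ}` used in the one-step annulus comparison. -/
noncomputable def stepC (κ : ℝ) : ℝ≥0∞ := ((2:ℝ≥0∞) ^ κ) ^ (3:ℕ)

lemma stepC_ne_top {κ : ℝ} (hκ : 0 < κ) : stepC κ ≠ ⊤ :=
  ENNReal.pow_ne_top (ENNReal.rpow_ne_top_of_nonneg hκ.le (by norm_num))

lemma stepC_ne_zero {κ : ℝ} (hκ : 0 < κ) : stepC κ ≠ 0 := by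
  have : (2:ℝ≥0∞) ^ κ ≠ 0 := by
    simp [ENNReal.rpow_eq_zero_iff]
  simp [stepC, pow_eq_zero_iff, this]

/-- One-step annulus comparison: the outer width-`h` annulus has measure at most
`2^{3κ}` times the adjacent inner width-`h` annulus. -/
lemma step_lemma {X : Type} [MetricSpace X] [CompactSpace X] [MeasurableSpace X] [BorelSpace X]
    (υ : Measure X) {κ : ℝ} (hκ : 0 < κ) (hgeo : IsGeodesicSpace X) (hdbl : DoublingFor υ κ)
    (x : X) {r h : ℝ} (hh : 0 < h) (hr : 2*h ≤ r) :
    υ (ball x r \ ball x (r - h)) ≤ stepC κ * υ (ball x (r - h) \ ball x (r - 2*h)) := by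
  set E := ball x r \ ball x (r - h) with hE
  set uu : ℝ → ℝ := fun t => (t + r) / 2 - 5 * h / 4 with huu
  -- midpoints
  have key : ∀ y : X, ∃ p : X, y ∈ E →
      dist x p = uu (dist x y) ∧ dist y p = dist x y - uu (dist x y) := by
    intro y
    by_cases hy : y ∈ E
    · obtain ⟨γ, hγ0, hγd, hγiso⟩ := hgeo x y
      have ht1 : r - h ≤ dist x y := by
        have := hy.2
        rw [mem_ball, dist_comm] at this
        linarith [not_lt.mp this]
      have ht2 : dist x y < r := by
        have := hy.1; rw [mem_ball, dist_comm] at this; exact this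
      have hu0 : 0 ≤ uu (dist x y) := by simp only [huu]; linarith
      have hu3 : uu (dist x y) ≤ dist x y := by simp only [huu]; linarith
      refine ⟨γ (uu (dist x y)), fun _ => ⟨?_, ?_⟩⟩
      · have := hγiso 0 ⟨le_refl 0, dist_nonneg⟩ (uu (dist x y)) ⟨hu0, hu3⟩
        rw [hγ0] at this
        rw [this, abs_of_nonpos (by linarith)]
        ring
      · have := hγiso (dist x y) ⟨dist_nonneg, le_refl _⟩ (uu (dist x y)) ⟨hu0, hu3⟩
        rw [hγd] at this
        rw [this, abs_of_nonneg (by linarith)]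
    · exact ⟨x, fun hc => absurd hc hy⟩
  choose m hm using key
  have hmemE : ∀ y ∈ E, r - h ≤ dist x y ∧ dist x y < r := by
    intro y hy
    constructor
    · have := hy.2; rw [mem_ball, dist_comm] at this; linarith [not_lt.mp this]
    · have := hy.1; rw [mem_ball, dist_comm] at this; exact this
  -- small balls around midpoints sit in the inner annulus
  have hball_sub : ∀ y ∈ E, ball (m y) (h/4) ⊆ ball x (r - h) \ ball x (r - 2*h) := by
    intro y hy z hz
    obtain ⟨ht1, ht2⟩ := hmemE y hy
    have hxm : dist x (m y) = uu (dist x y) := (hm y hy).1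
    have hA : dist x (m y) < r - 5*h/4 := by rw [hxm]; simp only [huu]; linarith
    have hB : r - 7*h/4 ≤ dist x (m y) := by rw [hxm]; simp only [huu]; linarith
    rw [mem_ball] at hz
    constructor
    · rw [mem_ball]
      have h1 : dist z x ≤ dist z (m y) + dist (m y) x := dist_triangle _ _ _
      have h2 : dist (m y) x = dist x (m y) := dist_comm _ _
      linarith
    · intro hz2
      rw [mem_ball] at hz2
      have h1 : dist x (m y) ≤ dist x z + dist z (m y) := dist_triangle _ _ _
      have h2 : dist x z = dist z x := dist_comm _ _
      linarith
  have hdym : ∀ y ∈ E, dist y (m y) ≤ 5*h/4 := by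
    intro y hy
    obtain ⟨ht1, ht2⟩ := hmemE y hy
    have h1 := (hm y hy).2
    rw [h1]
    simp only [huu]
    linarith
  -- a maximal separated subset via Zorn's lemma
  set 𝒮 : Set (Set X) := {S | S ⊆ E ∧ S.Pairwise fun a b => h/2 < dist (m a) (m b)} with h𝒮
  obtain ⟨S, hSmax⟩ := zorn_subset 𝒮 (by
    intro c hc hchain
    refine ⟨⋃₀ c, ⟨?_, ?_⟩, fun s hs => subset_sUnion_of_mem hs⟩
    · intro z hz
      obtain ⟨s, hs, hzs⟩ := hz
      exact (hc hs).1 hzs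
    · intro a ha b hb hab
      obtain ⟨s, hs, has⟩ := ha
      obtain ⟨s', hs', hbs'⟩ := hb
      by_cases hss : s = s'
      · exact (hc hs').2 (hss ▸ has) hbs' hab
      rcases hchain hs hs' hss with h1 | h1
      · exact (hc hs').2 (h1 has) hbs' hab
      · exact (hc hs).2 has (h1 hbs') hab)
  have hSE : S ⊆ E := hSmax.1.1
  have hSsep : S.Pairwise fun a b => h/2 < dist (m a) (m b) := hSmax.1.2
  -- maximality gives a covering property
  have hcov : ∀ y ∈ E, ∃ y' ∈ S, dist (m y) (m y') ≤ h/2 := by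
    intro y hy
    by_contra hcon
    push_neg at hcon
    have hyS : y ∉ S := by
      intro hyS
      have := hcon y hyS
      simp only [dist_self] at this
      linarith
    have hins : insert y S ∈ 𝒮 := by
      refine ⟨insert_subset hy hSE, ?_⟩
      intro a ha b hb hab
      rcases ha with rfl | ha
      · rcases hb with rfl | hb
        · exact absurd rfl hab
        · exact hcon b hb
      · rcases hb with rfl | hb
        · rw [dist_comm]; exact hcon a ha
        · exact hSsep ha hb hab
    have := hSmax.2 hins (subset_insert y S)
    exact hyS (this (mem_insert y S))
  -- S is finite
  have hSfin : S.Finite := by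
    have htb : TotallyBounded (univ : Set X) := isCompact_univ.totallyBounded
    obtain ⟨F, hFfin, hFcov⟩ := (Metric.totallyBounded_iff).1 htb (h/4) (by linarith)
    have hcent : ∀ w : X, ∃ z, z ∈ F ∧ w ∈ ball z (h/4) := by
      intro w
      have := hFcov (mem_univ w)
      simpa using this
    choose cnt hcnt1 hcnt2 using hcent
    apply Set.Finite.of_finite_image (f := fun y => cnt (m y))
    · exact hFfin.subset (by rintro _ ⟨y, _, rfl⟩; exact hcnt1 (m y))
    · intro y₁ hy₁ y₂ hy₂ heq
      by_contra hne
      have hsep : h/2 < dist (m y₁) (m y₂) := hSsep hy₁ hy₂ hne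
      have h1 : dist (m y₁) (cnt (m y₁)) < h/4 := mem_ball.mp (hcnt2 (m y₁))
      have h2 : dist (m y₂) (cnt (m y₂)) < h/4 := mem_ball.mp (hcnt2 (m y₂))
      have heq' : cnt (m y₁) = cnt (m y₂) := heq
      have h3 : dist (m y₁) (m y₂) ≤
          dist (m y₁) (cnt (m y₁)) + dist (m y₂) (cnt (m y₁)) := by
        calc dist (m y₁) (m y₂) ≤ dist (m y₁) (cnt (m y₁)) + dist (cnt (m y₁)) (m y₂) :=
              dist_triangle _ _ _
          _ = dist (m y₁) (cnt (m y₁)) + dist (m y₂) (cnt (m y₁)) := by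
              rw [dist_comm (cnt (m y₁)) (m y₂)]
      rw [heq'] at h1 h3
      linarith
  -- the doubling estimate, three times
  have hdbl3 : ∀ z : X, υ (ball z (2*h)) ≤ stepC κ * υ (ball z (h/4)) := by
    intro z
    have h1 := hdbl z h hh
    have h2 := hdbl z (h/2) (by linarith)
    have h3 := hdbl z (h/4) (by linarith)
    rw [show 2*(h/2) = h by ring] at h2
    rw [show 2*(h/4) = h/2 by ring] at h3
    calc υ (ball z (2*h)) ≤ (2:ℝ≥0∞)^κ * υ (ball z h) := h1
      _ ≤ (2:ℝ≥0∞)^κ * ((2:ℝ≥0∞)^κ * υ (ball z (h/2))) := mul_le_mul_right h2 _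
      _ ≤ (2:ℝ≥0∞)^κ * ((2:ℝ≥0∞)^κ * ((2:ℝ≥0∞)^κ * υ (ball z (h/4)))) :=
          mul_le_mul_right (mul_le_mul_right h3 _) _
      _ = stepC κ * υ (ball z (h/4)) := by rw [stepC]; ring
  classical
  set T := hSfin.toFinset with hT
  calc υ E ≤ υ (⋃ y ∈ T, ball (m y) (2*h)) := by
        apply measure_mono
        intro y hy
        obtain ⟨y', hy'S, hy'd⟩ := hcov y hy
        have hmem : y ∈ ball (m y') (2*h) := by
          rw [mem_ball]
          have := dist_triangle y (m y) (m y')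
          have hd := hdym y hy
          linarith
        exact mem_biUnion (hSfin.mem_toFinset.mpr hy'S) hmem
    _ ≤ ∑ y ∈ T, υ (ball (m y) (2*h)) := measure_biUnion_finset_le T _
    _ ≤ ∑ y ∈ T, stepC κ * υ (ball (m y) (h/4)) := Finset.sum_le_sum fun y _ => hdbl3 (m y)
    _ = stepC κ * ∑ y ∈ T, υ (ball (m y) (h/4)) := by rw [Finset.mul_sum]
    _ = stepC κ * υ (⋃ y ∈ T, ball (m y) (h/4)) := by
        rw [measure_biUnion_finset ?_ fun y _ => measurableSet_ball]
        intro a ha b hb hab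
        have haS : a ∈ S := hSfin.mem_toFinset.mp ha
        have hbS : b ∈ S := hSfin.mem_toFinset.mp hb
        have := hSsep haS hbS hab
        exact ball_disjoint_ball (by linarith)
    _ ≤ stepC κ * υ (ball x (r - h) \ ball x (r - 2*h)) := by
        refine mul_le_mul_right (measure_mono ?_) _
        refine iUnion₂_subset fun y hy => ?_
        exact hball_sub y (hSE (hSfin.mem_toFinset.mp hy))

/-- Iterated annulus bound: annuli of relative width `2^{-(n+1)}` have measure at most
`(C/(C+1))^n` times the ball. -/
lemma annulus_bound {κ : ℝ} (hκ : 0 < κ) :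
    ∀ n : ℕ, ∀ (X : Type) [MetricSpace X] [CompactSpace X] [MeasurableSpace X] [BorelSpace X]
      (υ : Measure X), IsGeodesicSpace X → DoublingFor υ κ →
      ∀ x : X, ∀ r : ℝ, 0 < r →
        υ (ball x r \ ball x ((1 - (1/2:ℝ)^(n+1)) * r)) ≤
          (stepC κ / (stepC κ + 1))^n * υ (ball x r) := by
  intro n
  induction n with
  | zero =>
    intro X _ _ _ _ υ _ _ x r hr
    simpa using measure_mono (diff_subset : ball x r \ _ ⊆ ball x r)
  | succ n ih =>
    intro X _ _ _ _ υ hgeo hdbl x r hr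
    set h : ℝ := (1/2:ℝ)^(n+2) * r with hh_def
    have hpow_pos : (0:ℝ) < (1/2:ℝ)^(n+2) := by positivity
    have hh : 0 < h := by positivity
    have hple : ((1:ℝ)/2)^(n+2) ≤ (1/2:ℝ)^1 :=
      pow_le_pow_of_le_one (by norm_num) (by norm_num) (by omega)
    have h2r : 2*h ≤ r := by
      rw [hh_def]
      nlinarith
    have hps : (1/2:ℝ)^(n+2) = (1/2:ℝ)^(n+1) * (1/2) := pow_succ _ _
    have e1 : (1 - (1/2:ℝ)^(n+1+1)) * r = r - h := by rw [hh_def]; ring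
    have e2 : (1 - (1/2:ℝ)^(n+1)) * r = r - 2*h := by rw [hh_def, hps]; ring
    have hstep := step_lemma υ hκ hgeo hdbl x hh h2r
    have hIH := ih X υ hgeo hdbl x r hr
    rw [e2] at hIH
    rw [e1]
    set A := ball x r \ ball x (r - h) with hA
    set B := ball x (r - h) \ ball x (r - 2*h) with hB
    have hsub1 : ball x (r - 2*h) ⊆ ball x (r - h) := ball_subset_ball (by linarith)
    have hsub2 : ball x (r - h) ⊆ ball x r := ball_subset_ball (by linarith)
    have hdisj : Disjoint A B := disjoint_sdiff_left.mono_right diff_subset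
    have hunion : A ∪ B = ball x r \ ball x (r - 2*h) := diff_union_diff_cancel hsub2 hsub1
    have hsum : υ A + υ B = υ (ball x r \ ball x (r - 2*h)) := by
      rw [← hunion]
      exact (measure_union hdisj (measurableSet_ball.diff measurableSet_ball)).symm
    have key : υ A * (stepC κ + 1) ≤
        stepC κ * ((stepC κ / (stepC κ + 1))^n * υ (ball x r)) := by
      calc υ A * (stepC κ + 1) = stepC κ * υ A + υ A := by ring
        _ ≤ stepC κ * υ A + stepC κ * υ B := add_le_add_right hstep _
        _ = stepC κ * (υ A + υ B) := by ring
        _ = stepC κ * υ (ball x r \ ball x (r - 2*h)) := by rw [hsum]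
        _ ≤ stepC κ * ((stepC κ / (stepC κ + 1))^n * υ (ball x r)) :=
            mul_le_mul_right hIH _
    have hC1 : stepC κ + 1 ≠ 0 := by simp
    have hC2 : stepC κ + 1 ≠ ⊤ := by
      simp [ENNReal.add_eq_top, stepC_ne_top hκ]
    have hdiv := (ENNReal.le_div_iff_mul_le (Or.inl hC1) (Or.inl hC2)).mpr key
    refine hdiv.trans_eq ?_
    simp only [div_eq_mul_inv]
    set b := (stepC κ + 1)⁻¹ with hb
    ring

end AnnulusAux

/-- measures of thin annuli are uniformly small in doubling geodesic spaces. -/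
theorem stmt10 :
    ∀ κ : ℝ, 0 < κ → ∀ ε : ℝ, 0 < ε →
      ∃ δ : ℝ, δ ∈ Ioo (0:ℝ) (1/2) ∧
        ∀ (X : Type) [MetricSpace X] [CompactSpace X] [MeasurableSpace X] [BorelSpace X]
          (υ : Measure X), IsProbabilityMeasure υ → IsGeodesicSpace X → DoublingFor υ κ →
          ∀ x : X, ∀ r : ℝ, 0 < r →
            υ (ball x r \ ball x ((1 - δ) * r)) ≤ ENNReal.ofReal ε * υ (ball x r) := by
  intro κ hκ ε hε
  set Cr := (stepC κ).toReal with hCr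
  have hCpos : 0 < Cr := ENNReal.toReal_pos (stepC_ne_zero hκ) (stepC_ne_top hκ)
  set θr := Cr / (Cr + 1) with hθr
  have hθ0 : 0 ≤ θr := by positivity
  have hθ1 : θr < 1 := by
    rw [hθr, div_lt_one (by positivity)]
    linarith
  obtain ⟨n₀, hn₀⟩ := exists_pow_lt_of_lt_one hε hθ1
  set n := n₀ + 1 with hn
  refine ⟨(1/2:ℝ)^(n+1), ⟨by positivity, ?_⟩, ?_⟩
  · have : ((1:ℝ)/2)^(n+1) ≤ (1/2:ℝ)^2 :=
      pow_le_pow_of_le_one (by norm_num) (by norm_num) (by omega)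
    nlinarith
  · intro X _ _ _ _ υ hprob hgeo hdbl x r hr
    refine (annulus_bound hκ n X υ hgeo hdbl x r hr).trans (mul_le_mul_left ?_ _)
    have hθeq : stepC κ / (stepC κ + 1) = ENNReal.ofReal θr := by
      rw [hθr, ENNReal.ofReal_div_of_pos (by positivity)]
      congr 1
      · exact (ENNReal.ofReal_toReal (stepC_ne_top hκ)).symm
      · rw [ENNReal.ofReal_add hCpos.le zero_le_one, ENNReal.ofReal_one,
          ENNReal.ofReal_toReal (stepC_ne_top hκ)]
    rw [hθeq, ← ENNReal.ofReal_pow hθ0]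
    apply ENNReal.ofReal_le_ofReal
    calc θr^n ≤ θr^n₀ := pow_le_pow_of_le_one hθ0 hθ1.le (by omega)
      _ ≤ ε := hn₀.le
end

section
/- Let (X, υ) be a compact metric measure space, let 1 < p < ∞, let f_i → f_∞ in L^p(X, υ), and let {p_i} be a sequence in [1, p] converging to p_∞ ∈ [1, p]. Then c_{p_i}(f_i) → c_{p_∞}(f_∞) as i → ∞. -/
open MeasureTheory Metric Filter Set
open scoped Topology NNReal ENNReal
open Classical

variable {X : Type*} [MetricSpace X]

set_option linter.unusedSectionVars false

section helpers17
variable {X : Type*} [MetricSpace X] [MeasurableSpace X] {υ : Measure X} [IsProbabilityMeasure υ]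

lemma nq_nonneg (q : ℝ) (g : X → ℝ) : 0 ≤ (∫ x, |g x| ^ q ∂υ) ^ (1/q) :=
  Real.rpow_nonneg (integral_nonneg fun x => Real.rpow_nonneg (abs_nonneg _) _) _

lemma elp_eq {q : ℝ} (hq : 0 < q) {g : X → ℝ} (hg : MemLp g (ENNReal.ofReal q) υ) :
    eLpNorm g (ENNReal.ofReal q) υ = ENNReal.ofReal ((∫ x, |g x| ^ q ∂υ) ^ (1/q)) := by
  rw [hg.eLpNorm_eq_integral_rpow_norm (ENNReal.ofReal_pos.2 hq).ne' ENNReal.ofReal_ne_top]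
  simp [ENNReal.toReal_ofReal hq.le, Real.norm_eq_abs, one_div]

lemma nq_mono {q r : ℝ} (hq : 0 < q) (hqr : q ≤ r) {g : X → ℝ}
    (hg : MemLp g (ENNReal.ofReal r) υ) :
    (∫ x, |g x| ^ q ∂υ) ^ (1/q) ≤ (∫ x, |g x| ^ r ∂υ) ^ (1/r) := by
  have hr : 0 < r := hq.trans_le hqr
  have hg' : MemLp g (ENNReal.ofReal q) υ :=
    hg.mono_exponent (ENNReal.ofReal_le_ofReal hqr)
  have h := eLpNorm_le_eLpNorm_of_exponent_le (μ := υ)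
    (ENNReal.ofReal_le_ofReal hqr) hg.aestronglyMeasurable
  rw [elp_eq hq hg', elp_eq hr hg] at h
  exact (ENNReal.ofReal_le_ofReal_iff (nq_nonneg _ _)).1 h

lemma nq_add {q : ℝ} (hq : 1 ≤ q) {g h : X → ℝ}
    (hg : MemLp g (ENNReal.ofReal q) υ) (hh : MemLp h (ENNReal.ofReal q) υ) :
    (∫ x, |g x + h x| ^ q ∂υ) ^ (1/q) ≤
      (∫ x, |g x| ^ q ∂υ) ^ (1/q) + (∫ x, |h x| ^ q ∂υ) ^ (1/q) := by
  have hq0 : 0 < q := lt_of_lt_of_le one_pos hq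
  have key := eLpNorm_add_le hg.aestronglyMeasurable hh.aestronglyMeasurable
    (ENNReal.one_le_ofReal.2 hq)
  have hgh : MemLp (g + h) (ENNReal.ofReal q) υ := hg.add hh
  rw [elp_eq hq0 hgh, elp_eq hq0 hg, elp_eq hq0 hh,
    ← ENNReal.ofReal_add (nq_nonneg _ _) (nq_nonneg _ _)] at key
  have h2 := (ENNReal.ofReal_le_ofReal_iff (add_nonneg (nq_nonneg _ _) (nq_nonneg _ _))).1 key
  simpa [Pi.add_apply] using h2

lemma nq_const {q : ℝ} (hq : 0 < q) (c : ℝ) :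
    (∫ _x : X, |c| ^ q ∂υ) ^ (1/q) = |c| := by
  rw [integral_const]
  simp only [probReal_univ, one_smul]
  rw [← Real.rpow_mul (abs_nonneg c), mul_one_div_cancel hq.ne', Real.rpow_one]

lemma cP_bddBelow (q : ℝ) (g : X → ℝ) :
    BddBelow (range fun c : ℝ => (∫ x, |g x - c| ^ q ∂υ) ^ (1/q)) :=
  ⟨0, by rintro _ ⟨c, rfl⟩; exact nq_nonneg _ _⟩

lemma cP_le_cP_add {q : ℝ} (hq : 1 ≤ q) {g h : X → ℝ}
    (hg : MemLp g (ENNReal.ofReal q) υ) (hh : MemLp h (ENNReal.ofReal q) υ) :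
    cP υ q g ≤ cP υ q h + (∫ x, |g x - h x| ^ q ∂υ) ^ (1/q) := by
  have key : ∀ c : ℝ, cP υ q g - (∫ x, |g x - h x| ^ q ∂υ) ^ (1/q) ≤
      (∫ x, |h x - c| ^ q ∂υ) ^ (1/q) := by
    intro c
    have h1 : cP υ q g ≤ (∫ x, |g x - c| ^ q ∂υ) ^ (1/q) := ciInf_le (cP_bddBelow _ _) c
    have h2 := nq_add hq (g := fun x => h x - c) (h := fun x => g x - h x)
      (hh.sub (memLp_const c)) (hg.sub hh)
    have e : ∀ x : X, h x - c + (g x - h x) = g x - c := fun x => by ring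
    simp only [e] at h2
    linarith
  have h4 := le_ciInf key
  have : cP υ q h = ⨅ c : ℝ, (∫ x, |h x - c| ^ q ∂υ) ^ (1/q) := rfl
  linarith [h4, this ▸ h4]

lemma abs_cP_sub {q : ℝ} (hq : 1 ≤ q) {g h : X → ℝ}
    (hg : MemLp g (ENNReal.ofReal q) υ) (hh : MemLp h (ENNReal.ofReal q) υ) :
    |cP υ q g - cP υ q h| ≤ (∫ x, |g x - h x| ^ q ∂υ) ^ (1/q) := by
  have h1 := cP_le_cP_add hq hg hh
  have h2 := cP_le_cP_add hq hh hg
  have e : ∀ x : X, |h x - g x| = |g x - h x| := fun x => abs_sub_comm _ _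
  simp only [e] at h2
  rw [abs_sub_le_iff]
  constructor <;> linarith

end helpers17

set_option maxHeartbeats 1000000 in
lemma partB {X : Type*} [MetricSpace X] [MeasurableSpace X] (υ : Measure X) [IsProbabilityMeasure υ]
    (p : ℝ) (hp : 1 < p) (flim : X → ℝ) (hflim : MemLp flim (ENNReal.ofReal p) υ)
    (ps : ℕ → ℝ) (hps : ∀ i, ps i ∈ Icc (1:ℝ) p)
    (plim : ℝ) (hplim : plim ∈ Icc (1:ℝ) p)
    (hpstend : Tendsto ps atTop (𝓝 plim)) :
    Tendsto (fun i => cP υ (ps i) flim) atTop (𝓝 (cP υ plim flim)) := by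
  have hp0 : (0:ℝ) < p := lt_trans one_pos hp
  set M : ℝ := (∫ x, |flim x| ^ p ∂υ) ^ (1/p) with hM
  have hM0 : 0 ≤ M := nq_nonneg _ _
  set R : ℝ := 2 * M + 1 with hR
  have hR0 : 0 < R := by positivity
  set K : Set ℝ := Icc (-R) R with hK
  haveI hKne : Nonempty ↥K := ⟨⟨0, by exact ⟨by linarith, by linarith⟩⟩⟩
  set G : ℝ × ℝ → ℝ := fun qc => (∫ x, |flim x - qc.2| ^ qc.1 ∂υ) ^ (1/qc.1) with hG
  have hGnonneg : ∀ qc, 0 ≤ G qc := fun qc => nq_nonneg _ _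
  have bddK : ∀ q : ℝ, BddBelow (range fun c : ↥K => G (q, (c:ℝ))) :=
    fun q => ⟨0, by rintro _ ⟨c, rfl⟩; exact hGnonneg _⟩
  -- restriction of the infimum to K
  have restrict : ∀ q ∈ Icc (1:ℝ) p, cP υ q flim = ⨅ c : ↥K, G (q, (c:ℝ)) := by
    rintro q ⟨hq1, hqp⟩
    have hq0 : 0 < q := lt_of_lt_of_le one_pos hq1
    have hmem : MemLp flim (ENNReal.ofReal q) υ :=
      hflim.mono_exponent (ENNReal.ofReal_le_ofReal hqp)
    have hNq : (∫ x, |flim x| ^ q ∂υ) ^ (1/q) ≤ M := nq_mono hq0 hqp hflim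
    have hG0 : G (q, 0) = (∫ x, |flim x| ^ q ∂υ) ^ (1/q) := by
      simp only [hG, sub_zero]
    have lower : ∀ c : ℝ, |c| ≤ G (q, c) + (∫ x, |flim x| ^ q ∂υ) ^ (1/q) := by
      intro c
      have h2 := nq_add hq1 (g := fun x => c - flim x) (h := flim)
        ((memLp_const c).sub hmem) hmem
      have e : ∀ x : X, c - flim x + flim x = c := fun x => by ring
      simp only [e] at h2
      rw [nq_const hq0 c] at h2
      have e2 : ∀ x : X, |c - flim x| = |flim x - c| := fun x => abs_sub_comm _ _
      simp only [e2] at h2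
      exact h2
    apply le_antisymm
    · exact le_ciInf fun c => ciInf_le (cP_bddBelow _ _) (c : ℝ)
    · apply le_ciInf
      intro c
      by_cases hc : |c| ≤ R
      · exact ciInf_le (bddK q) ⟨c, abs_le.1 hc⟩
      · push_neg at hc
        have h0 : (⨅ c : ↥K, G (q, (c:ℝ))) ≤ G (q, 0) :=
          ciInf_le (bddK q) ⟨0, by exact ⟨by linarith, by linarith⟩⟩
        have h1 := lower c
        rw [hG0] at h0
        have : R ≤ |c| := hc.le
        linarith
  -- joint continuity of G on S
  set S : Set (ℝ × ℝ) := Icc (1:ℝ) p ×ˢ K with hS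
  have hScompact : IsCompact S := isCompact_Icc.prod isCompact_Icc
  have hmeas : ∀ (r c : ℝ), 0 ≤ r → AEStronglyMeasurable (fun x => |flim x - c| ^ r) υ := by
    intro r c hr
    have hcont : Continuous fun t : ℝ => t ^ r :=
      continuous_iff_continuousAt.2 fun x => Real.continuousAt_rpow_const x r (Or.inr hr)
    have habs : AEStronglyMeasurable (fun x => |flim x - c|) υ := by
      simpa [Real.norm_eq_abs] using
        (hflim.aestronglyMeasurable.sub aestronglyMeasurable_const).norm
    exact hcont.comp_aestronglyMeasurable habs
  have hGcont : ContinuousOn G S := by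
    have hIcont : ContinuousOn (fun qc : ℝ × ℝ => ∫ x, |flim x - qc.2| ^ qc.1 ∂υ) S := by
      intro qc hqc
      obtain ⟨⟨hq1, hqp⟩, hc⟩ := hqc
      have hbound : Integrable (fun x => (|flim x| + (R + 1)) ^ p) υ := by
        have h1 : MemLp (fun x => |flim x| + (R + 1)) (ENNReal.ofReal p) υ :=
          (by simpa [Real.norm_eq_abs] using hflim.norm : MemLp (fun x => |flim x|)
            (ENNReal.ofReal p) υ).add (memLp_const _)
        have h2 := h1.integrable_norm_rpow (ENNReal.ofReal_pos.2 hp0).ne' ENNReal.ofReal_ne_top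
        rw [ENNReal.toReal_ofReal hp0.le] at h2
        refine h2.congr (Eventually.of_forall fun x => ?_)
        simp only [Real.norm_eq_abs]
        rw [abs_of_nonneg (show (0:ℝ) ≤ |flim x| + (R + 1) by positivity)]
      refine tendsto_integral_filter_of_dominated_convergence
        (fun x => (|flim x| + (R + 1)) ^ p)
        (by filter_upwards [self_mem_nhdsWithin] with rc hrc
            exact hmeas _ _ (le_trans zero_le_one hrc.1.1)) ?_ hbound ?_
      · filter_upwards [self_mem_nhdsWithin] with rc hrc
        obtain ⟨⟨hr1, hrp⟩, hc2⟩ := hrc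
        refine Eventually.of_forall fun x => ?_
        rw [Real.norm_of_nonneg (Real.rpow_nonneg (abs_nonneg _) _)]
        have hb1 : (1:ℝ) ≤ |flim x| + (R + 1) := by
          have := abs_nonneg (flim x); linarith
        have ht : |flim x - rc.2| ≤ |flim x| + (R + 1) := by
          have h4 : |rc.2| ≤ R := abs_le.2 ⟨hc2.1, hc2.2⟩
          calc |flim x - rc.2| ≤ |flim x| + |rc.2| := abs_sub _ _
            _ ≤ |flim x| + (R + 1) := by linarith
        calc |flim x - rc.2| ^ rc.1 ≤ (|flim x| + (R + 1)) ^ rc.1 :=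
              Real.rpow_le_rpow (abs_nonneg _) ht (le_trans zero_le_one hr1)
          _ ≤ (|flim x| + (R + 1)) ^ p := Real.rpow_le_rpow_of_exponent_le hb1 hrp
      · refine Eventually.of_forall fun x => ?_
        have c1 : ContinuousAt (fun rc : ℝ × ℝ => |flim x - rc.2| ^ rc.1) qc := by
          have h5 := Real.continuousAt_rpow (|flim x - qc.2|, qc.1)
            (Or.inr (lt_of_lt_of_le one_pos hq1))
          have h6 : ContinuousAt (fun rc : ℝ × ℝ => (|flim x - rc.2|, rc.1)) qc :=
            (((continuous_const.sub continuous_snd).abs.prodMk continuous_fst).continuousAt)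
          exact ContinuousAt.comp (g := fun pr : ℝ × ℝ => pr.1 ^ pr.2)
            (f := fun rc : ℝ × ℝ => (|flim x - rc.2|, rc.1)) (x := qc) h5 h6
        exact c1.tendsto.mono_left nhdsWithin_le_nhds
    refine ContinuousOn.rpow hIcont ?_ ?_
    · exact continuousOn_const.div continuousOn_fst
        (fun qc hqc => (lt_of_lt_of_le one_pos hqc.1.1).ne')
    · intro qc hqc
      exact Or.inr (one_div_pos.2 (lt_of_lt_of_le one_pos hqc.1.1))
  -- final assembly via uniform continuity
  have UC := hScompact.uniformContinuousOn_of_continuous hGcont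
  rw [Metric.uniformContinuousOn_iff] at UC
  have heq : ∀ i, cP υ (ps i) flim = ⨅ c : ↥K, G (ps i, (c:ℝ)) :=
    fun i => restrict (ps i) (hps i)
  have heqlim : cP υ plim flim = ⨅ c : ↥K, G (plim, (c:ℝ)) := restrict plim hplim
  rw [Metric.tendsto_atTop]
  intro ε hε
  obtain ⟨δ, hδ0, hδ⟩ := UC (ε/2) (half_pos hε)
  obtain ⟨N, hN⟩ := Metric.tendsto_atTop.1 hpstend δ hδ0
  refine ⟨N, fun n hn => ?_⟩
  have hdist := hN n hn
  have key : ∀ c : ↥K, |G (ps n, (c:ℝ)) - G (plim, (c:ℝ))| ≤ ε/2 := by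
    intro c
    have m1 : (ps n, (c:ℝ)) ∈ S := ⟨hps n, c.2⟩
    have m2 : (plim, (c:ℝ)) ∈ S := ⟨hplim, c.2⟩
    have hd : dist (ps n, (c:ℝ)) (plim, (c:ℝ)) < δ := by
      rw [Prod.dist_eq]
      simp only [dist_self]
      rw [max_eq_left dist_nonneg]
      exact hdist
    have := hδ _ m1 _ m2 hd
    rw [Real.dist_eq] at this
    exact this.le
  have h1 : (⨅ c : ↥K, G (ps n, (c:ℝ))) ≤ (⨅ c : ↥K, G (plim, (c:ℝ))) + ε/2 := by
    have : ∀ c : ↥K, (⨅ c : ↥K, G (ps n, (c:ℝ))) - ε/2 ≤ G (plim, (c:ℝ)) := by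
      intro c
      have h2 : (⨅ c : ↥K, G (ps n, (c:ℝ))) ≤ G (ps n, (c:ℝ)) := ciInf_le (bddK _) c
      have h3 := (abs_le.1 (key c)).2
      linarith
    have h4 := le_ciInf this
    linarith
  have h2 : (⨅ c : ↥K, G (plim, (c:ℝ))) ≤ (⨅ c : ↥K, G (ps n, (c:ℝ))) + ε/2 := by
    have : ∀ c : ↥K, (⨅ c : ↥K, G (plim, (c:ℝ))) - ε/2 ≤ G (ps n, (c:ℝ)) := by
      intro c
      have h2 : (⨅ c : ↥K, G (plim, (c:ℝ))) ≤ G (plim, (c:ℝ)) := ciInf_le (bddK _) c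
      have h3 := (abs_le.1 (key c)).1
      linarith
    have h4 := le_ciInf this
    linarith
  rw [Real.dist_eq, heq n, heqlim]
  have : |(⨅ c : ↥K, G (ps n, (c:ℝ))) - ⨅ c : ↥K, G (plim, (c:ℝ))| ≤ ε/2 :=
    abs_le.2 ⟨by linarith, by linarith⟩
  linarith [half_lt_self hε]


/-- continuity of `c_p` under `L^p`-convergence and varying exponents. -/
theorem stmt17 {X : Type*} [MetricSpace X] [CompactSpace X] [MeasurableSpace X] [BorelSpace X]
    (υ : Measure X) [IsProbabilityMeasure υ]
    (p : ℝ) (hp : 1 < p)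
    (f : ℕ → X → ℝ) (flim : X → ℝ)
    (hf : ∀ i, MemLp (f i) (ENNReal.ofReal p) υ) (hflim : MemLp flim (ENNReal.ofReal p) υ)
    (hconv : Filter.Tendsto (fun i => (∫ x, |f i x - flim x| ^ p ∂υ) ^ (1/p))
      Filter.atTop (𝓝 0))
    (ps : ℕ → ℝ) (hps : ∀ i, ps i ∈ Icc (1:ℝ) p)
    (plim : ℝ) (hplim : plim ∈ Icc (1:ℝ) p)
    (hpstend : Filter.Tendsto ps Filter.atTop (𝓝 plim)) :
    Filter.Tendsto (fun i => cP υ (ps i) (f i)) Filter.atTop (𝓝 (cP υ plim flim)) := by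
  have hA : ∀ i, |cP υ (ps i) (f i) - cP υ (ps i) flim| ≤
      (∫ x, |f i x - flim x| ^ p ∂υ) ^ (1/p) := by
    intro i
    obtain ⟨h1, h2⟩ := hps i
    have hq0 : 0 < ps i := lt_of_lt_of_le one_pos h1
    have hfi : MemLp (f i) (ENNReal.ofReal (ps i)) υ :=
      (hf i).mono_exponent (ENNReal.ofReal_le_ofReal h2)
    have hfl : MemLp flim (ENNReal.ofReal (ps i)) υ :=
      hflim.mono_exponent (ENNReal.ofReal_le_ofReal h2)
    exact (abs_cP_sub h1 hfi hfl).trans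
      (nq_mono (g := fun x => f i x - flim x) hq0 h2 ((hf i).sub hflim))
  have hB := partB υ p hp flim hflim ps hps plim hplim hpstend
  have hdiff : Tendsto (fun i => cP υ (ps i) (f i) - cP υ (ps i) flim) atTop (𝓝 0) :=
    squeeze_zero_norm (fun i => by simpa [Real.norm_eq_abs] using hA i) hconv
  have hsum := hdiff.add hB
  rw [zero_add] at hsum
  refine hsum.congr fun i => ?_
  ring
end
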